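/- Let X be a Banach space with a Schauder decomposition and associated projections (P_n), let Y be a Banach space, and let T : X → Y be a bounded linear operator. Then the following are equivalent: (i) for every bounded horizontally block sequence (x_k) in X, lim_k ‖T x_k‖ = 0; (ii) T = lim_n T P_n in operator norm. -/

import Mathlib

open Filter Topology

/-- Let `X` have a Schauder decomposition with projections `(P n)`, `Y` a
Banach space, and `T : X → Y` bounded linear.  Then the following are equivalent:
(i) for every bounded horizontally block sequence `(x k)` (i.e. `x k = P_{I_k} x k` for
successive intervals `I_k = (a k, b k]`), `lim_k ‖T (x k)‖ = 0`;
(ii) `T = lim_n T ∘ P n` in operator norm.  (Such `T` are the horizontally compact ones.) -/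
theorem stmt14 (X Y : Type*) [NormedAddCommGroup X] [NormedSpace ℂ X] [CompleteSpace X]
    [NormedAddCommGroup Y] [NormedSpace ℂ Y] [CompleteSpace Y]
    (P : ℕ → X →L[ℂ] X)
    (hP_proj : ∀ m n, (P m).comp (P n) = P (min m n))
    (hP_lim : ∀ x : X, Tendsto (fun n => P n x) atTop (𝓝 x))
    (T : X →L[ℂ] Y) :
    (∀ (x : ℕ → X) (M : ℝ), (∀ k, ‖x k‖ ≤ M) →
        ∀ a b : ℕ → ℕ, (∀ k, a k < b k) → (∀ k, b k ≤ a (k + 1)) →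
          (∀ k, x k = P (b k) (x k) - P (a k) (x k)) →
          Tendsto (fun k => ‖T (x k)‖) atTop (𝓝 0)) ↔
      Tendsto (fun n => T.comp (P n)) atTop (𝓝 T) := by
  have happ : ∀ m n (z : X), P m (P n z) = P (min m n) z := by
    intro m n z
    have := ContinuousLinearMap.ext_iff.mp (hP_proj m n) z
    simpa using this
  constructor
  · -- (i) → (ii)
    intro h
    by_contra hT
    -- uniform bound on projections
    have hbdd : ∀ x : X, ∃ C, ∀ n, ‖P n x‖ ≤ C := by
      intro x
      obtain ⟨C, hC⟩ := (hP_lim x).norm.bddAbove_range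
      exact ⟨C, fun n => hC ⟨n, rfl⟩⟩
    obtain ⟨C, hC⟩ := banach_steinhaus hbdd
    have hC0 : (0 : ℝ) ≤ C := le_trans (norm_nonneg (P 0)) (hC 0)
    rw [Metric.tendsto_atTop] at hT
    push_neg at hT
    obtain ⟨ε, hε, hfreq⟩ := hT
    -- step lemma
    have step : ∀ N : ℕ, ∃ p : ℕ × ℕ × X, N ≤ p.1 ∧ p.1 < p.2.1 ∧
        p.2.2 = P p.2.1 p.2.2 - P p.1 p.2.2 ∧ ‖p.2.2‖ ≤ C * (C + 1) ∧
        ε / 4 ≤ ‖T p.2.2‖ := by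
      intro N
      obtain ⟨n, hnN, hn⟩ := hfreq N
      rw [dist_eq_norm] at hn
      have hop : ε / 2 < ‖T.comp (P n) - T‖ := lt_of_lt_of_le (by linarith) hn
      obtain ⟨x, hx1, hx2⟩ := (T.comp (P n) - T).exists_lt_apply_of_lt_opNorm hop
      set y := P n x - x with hy
      have hTy : ε / 2 < ‖T y‖ := by
        have : (T.comp (P n) - T) x = T y := by simp [hy, map_sub]
        rwa [this] at hx2
      have hyn : ‖y‖ ≤ C + 1 := by
        have h1 : ‖P n x‖ ≤ C * ‖x‖ :=
          le_trans ((P n).le_opNorm x) (mul_le_mul_of_nonneg_right (hC n) (norm_nonneg x))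
        have h2 : C * ‖x‖ ≤ C := by nlinarith [norm_nonneg x]
        calc ‖y‖ ≤ ‖P n x‖ + ‖x‖ := norm_sub_le _ _
        _ ≤ C + 1 := by linarith
      have hPny : P n y = 0 := by
        simp only [hy, map_sub, happ n n, min_self, sub_self]
      have hlim : Tendsto (fun m => ‖T (P m y)‖) atTop (𝓝 ‖T y‖) :=
        ((T.continuous.tendsto y).comp (hP_lim y)).norm
      have hev : ∀ᶠ m in atTop, ε / 4 < ‖T (P m y)‖ :=
        hlim.eventually (eventually_gt_nhds (by linarith))
      obtain ⟨m, hm1, hm2⟩ := (hev.and (eventually_gt_atTop n)).exists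
      refine ⟨⟨n, m, P m y⟩, hnN, hm2, ?_, ?_, le_of_lt hm1⟩
      · have h1 : P m (P m y) = P m y := by rw [happ, min_self]
        have h2 : P n (P m y) = 0 := by rw [happ, min_eq_left hm2.le, hPny]
        simp [h1, h2]
      · calc ‖P m y‖ ≤ ‖P m‖ * ‖y‖ := (P m).le_opNorm y
        _ ≤ C * (C + 1) := mul_le_mul (hC m) hyn (norm_nonneg y) hC0
    choose f hf1 hf2 hf3 hf4 hf5 using step
    set g : ℕ → ℕ × ℕ × X := fun k => Nat.rec (f 0) (fun _ p => f p.2.1) k with hg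
    have hgf : ∀ k, ∃ N, g k = f N := by
      intro k
      cases k with
      | zero => exact ⟨0, rfl⟩
      | succ k => exact ⟨(g k).2.1, rfl⟩
    set a : ℕ → ℕ := fun k => (g k).1 with ha
    set b : ℕ → ℕ := fun k => (g k).2.1 with hb
    set x : ℕ → X := fun k => (g k).2.2 with hx
    have hab : ∀ k, a k < b k := by
      intro k; obtain ⟨N, hN⟩ := hgf k
      simp only [ha, hb, hN]; exact hf2 N
    have hba : ∀ k, b k ≤ a (k + 1) := by
      intro k
      have : g (k + 1) = f (b k) := rfl
      simp only [ha, this]; exact hf1 (b k)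
    have hblock : ∀ k, x k = P (b k) (x k) - P (a k) (x k) := by
      intro k; obtain ⟨N, hN⟩ := hgf k
      simp only [ha, hb, hx, hN]; exact hf3 N
    have hbound : ∀ k, ‖x k‖ ≤ C * (C + 1) := by
      intro k; obtain ⟨N, hN⟩ := hgf k
      simp only [hx, hN]; exact hf4 N
    have hTx : ∀ k, ε / 4 ≤ ‖T (x k)‖ := by
      intro k; obtain ⟨N, hN⟩ := hgf k
      simp only [hx, hN]; exact hf5 N
    have := h x (C * (C + 1)) hbound a b hab hba hblock
    have hle : ε / 4 ≤ 0 := ge_of_tendsto this (Eventually.of_forall hTx)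
    linarith
  · -- (ii) → (i)
    intro hT x M hM a b hab hba hblock
    have hM0 : (0 : ℝ) ≤ M := le_trans (norm_nonneg _) (hM 0)
    have haS : StrictMono a := strictMono_nat_of_lt_succ fun k =>
      lt_of_lt_of_le (hab k) (hba k)
    have haT : Tendsto a atTop atTop := haS.tendsto_atTop
    have h1 : Tendsto (fun k => ‖T.comp (P (a k)) - T‖) atTop (𝓝 0) := by
      have := (tendsto_iff_norm_sub_tendsto_zero.mp hT).comp haT
      exact this
    have key : ∀ k, ‖T (x k)‖ ≤ ‖T.comp (P (a k)) - T‖ * M := by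
      intro k
      have hz : P (a k) (x k) = 0 := by
        conv_lhs => rw [hblock k]
        rw [map_sub, happ, happ, min_eq_left (hab k).le, min_self, sub_self]
      have heq : ‖T (x k)‖ = ‖(T.comp (P (a k)) - T) (x k)‖ := by
        simp [hz, norm_neg]
      rw [heq]
      calc ‖(T.comp (P (a k)) - T) (x k)‖ ≤ ‖T.comp (P (a k)) - T‖ * ‖x k‖ :=
            (T.comp (P (a k)) - T).le_opNorm (x k)
      _ ≤ ‖T.comp (P (a k)) - T‖ * M :=
            mul_le_mul_of_nonneg_left (hM k) (norm_nonneg _)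
    have hsq := squeeze_zero (fun k => norm_nonneg _) key (by simpa using h1.mul_const M)
    exact hsq
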